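/- (Chebyshev-type integral inequality.) Let f₁, f₂, g₁, g₂ : [0, α] → ℝ be integrable with f₁ ≥ 0 nonincreasing, f₂ ≥ 0 nondecreasing, g₁ ≥ 0 nonincreasing, g₂ ≥ 0 nondecreasing, and suppose ∫₀^α g₁ = ∫₀^α g₂. Then ∫₀^α f₁·(g₁ − g₂) ≥ 0 and ∫₀^α f₂·(g₁ − g₂) ≤ 0; consequently ∫₀^α f₁g₁ · ∫₀^α f₂g₂ ≥ ∫₀^α f₁g₂ · ∫₀^α f₂g₁. -/
import Mathlib


open MeasureTheory intervalIntegral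

private lemma mul_intervalIntegrable {α : ℝ} (hα : 0 ≤ α) {f g : ℝ → ℝ} {C : ℝ}
    (hfi : IntervalIntegrable f volume 0 α) (hgi : IntervalIntegrable g volume 0 α)
    (hC : ∀ x ∈ Set.Icc 0 α, |f x| ≤ C) :
    IntervalIntegrable (fun x => f x * g x) volume 0 α := by
  rw [intervalIntegrable_iff_integrableOn_Ioc_of_le hα] at hgi hfi ⊢
  refine hgi.bdd_mul (c := C) hfi.aestronglyMeasurable ?_
  refine ae_restrict_of_forall_mem measurableSet_Ioc fun x hx => ?_
  simpa using hC x (Set.Ioc_subset_Icc_self hx)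

private lemma key {α : ℝ} (hα : 0 ≤ α) {f h : ℝ → ℝ}
    (hfh : IntervalIntegrable (fun x => f x * h x) volume 0 α)
    (hhi : IntervalIntegrable h volume 0 α)
    (hf0 : ∀ x ∈ Set.Icc 0 α, 0 ≤ f x)
    (hfm : AntitoneOn f (Set.Icc 0 α))
    (hhm : AntitoneOn h (Set.Icc 0 α))
    (hint : ∫ x in (0:ℝ)..α, h x = 0) :
    0 ≤ ∫ x in (0:ℝ)..α, f x * h x := by
  set S : Set ℝ := {x ∈ Set.Icc 0 α | 0 ≤ h x} with hS
  set c : ℝ := sSup (insert 0 S) with hc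
  have hne : (insert 0 S).Nonempty := ⟨0, Set.mem_insert 0 S⟩
  have hub : ∀ y ∈ insert 0 S, y ≤ α := by
    rintro y (rfl | hy)
    · exact hα
    · exact hy.1.2
  have hbdd : BddAbove (insert 0 S) := ⟨α, hub⟩
  have hc0 : 0 ≤ c := le_csSup hbdd (Set.mem_insert 0 S)
  have hcα : c ≤ α := csSup_le hne hub
  have hcIcc : c ∈ Set.Icc 0 α := ⟨hc0, hcα⟩
  -- pointwise comparison off of {c}
  have hpt : ∀ x ∈ Set.Icc 0 α, x ≠ c → f c * h x ≤ f x * h x := by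
    intro x hx hxc
    rcases lt_or_gt_of_ne hxc with hlt | hgt
    · -- x < c : h x ≥ 0 and f c ≤ f x
      have hhx : 0 ≤ h x := by
        obtain ⟨y, hy, hxy⟩ := exists_lt_of_lt_csSup hne hlt
        rcases hy with rfl | hy
        · exact absurd hxy (not_lt.2 hx.1)
        · exact le_trans hy.2 (hhm hx hy.1 hxy.le)
      exact mul_le_mul_of_nonneg_right (hfm hx hcIcc hlt.le) hhx
    · -- c < x : h x ≤ 0 and f x ≤ f c
      have hhx : h x ≤ 0 := by
        by_contra hpos
        push_neg at hpos
        exact absurd (le_csSup hbdd (Set.mem_insert_of_mem 0 ⟨hx, hpos.le⟩)) (not_le.2 hgt)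
      exact mul_le_mul_of_nonpos_right (hfm hcIcc hx hgt.le) hhx
  have hconst : IntervalIntegrable (fun x => f c * h x) volume 0 α := hhi.const_mul _
  have hae : (fun x => f c * h x) ≤ᵐ[volume.restrict (Set.Icc 0 α)]
      fun x => f x * h x := by
    have h1 : ∀ᵐ x ∂(volume.restrict (Set.Icc 0 α)), x ≠ c := by
      refine ae_restrict_of_ae ?_
      have : volume ({c} : Set ℝ) = 0 := measure_singleton c
      rw [ae_iff]
      convert this using 2
      ext x
      simp
    filter_upwards [h1, ae_restrict_mem measurableSet_Icc] with x hxc hxmem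
    exact hpt x hxmem hxc
  have hmono := intervalIntegral.integral_mono_ae_restrict hα hconst hfh hae
  calc (0:ℝ) = f c * ∫ x in (0:ℝ)..α, h x := by rw [hint, mul_zero]
    _ = ∫ x in (0:ℝ)..α, f c * h x := (intervalIntegral.integral_const_mul _ _).symm
    _ ≤ ∫ x in (0:ℝ)..α, f x * h x := hmono

/-- Chebyshev-type integral inequality: if `f₁, g₁ ≥ 0` are nonincreasing, `f₂, g₂ ≥ 0`
nondecreasing on `[0, α]`, all integrable, and `∫₀^α g₁ = ∫₀^α g₂`, then
`∫ f₁(g₁ − g₂) ≥ 0`, `∫ f₂(g₁ − g₂) ≤ 0`, and `∫f₁g₁·∫f₂g₂ ≥ ∫f₁g₂·∫f₂g₁`. -/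
theorem chebyshev_type_inequality (α : ℝ) (hα : 0 < α) (f₁ f₂ g₁ g₂ : ℝ → ℝ)
    (hf₁i : IntervalIntegrable f₁ volume 0 α) (hf₂i : IntervalIntegrable f₂ volume 0 α)
    (hg₁i : IntervalIntegrable g₁ volume 0 α) (hg₂i : IntervalIntegrable g₂ volume 0 α)
    (hf₁0 : ∀ x ∈ Set.Icc 0 α, 0 ≤ f₁ x) (hf₂0 : ∀ x ∈ Set.Icc 0 α, 0 ≤ f₂ x)
    (hg₁0 : ∀ x ∈ Set.Icc 0 α, 0 ≤ g₁ x) (hg₂0 : ∀ x ∈ Set.Icc 0 α, 0 ≤ g₂ x)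
    (hf₁m : AntitoneOn f₁ (Set.Icc 0 α)) (hf₂m : MonotoneOn f₂ (Set.Icc 0 α))
    (hg₁m : AntitoneOn g₁ (Set.Icc 0 α)) (hg₂m : MonotoneOn g₂ (Set.Icc 0 α))
    (heq : ∫ x in (0:ℝ)..α, g₁ x = ∫ x in (0:ℝ)..α, g₂ x) :
    0 ≤ (∫ x in (0:ℝ)..α, f₁ x * (g₁ x - g₂ x)) ∧
      (∫ x in (0:ℝ)..α, f₂ x * (g₁ x - g₂ x)) ≤ 0 ∧
      (∫ x in (0:ℝ)..α, f₁ x * g₂ x) * (∫ x in (0:ℝ)..α, f₂ x * g₁ x) ≤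
        (∫ x in (0:ℝ)..α, f₁ x * g₁ x) * (∫ x in (0:ℝ)..α, f₂ x * g₂ x) := by
  have hα' : (0:ℝ) ≤ α := hα.le
  have h0 : (0:ℝ) ∈ Set.Icc 0 α := ⟨le_refl 0, hα'⟩
  have hαmem : α ∈ Set.Icc 0 α := ⟨hα', le_refl α⟩
  set h : ℝ → ℝ := fun x => g₁ x - g₂ x with hdef
  -- h is antitone on [0,α]
  have hhm : AntitoneOn h (Set.Icc 0 α) := fun a ha b hb hab =>
    sub_le_sub (hg₁m ha hb hab) (hg₂m ha hb hab)
  have hhi : IntervalIntegrable h volume 0 α := hg₁i.sub hg₂i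
  have hint : ∫ x in (0:ℝ)..α, h x = 0 := by
    simp only [hdef]
    rw [intervalIntegral.integral_sub hg₁i hg₂i, heq, sub_self]
  -- bounds for f₁ and f₂ on [0, α]
  have hf₁C : ∀ x ∈ Set.Icc 0 α, |f₁ x| ≤ f₁ 0 := fun x hx => by
    rw [abs_of_nonneg (hf₁0 x hx)]; exact hf₁m h0 hx hx.1
  have hf₂C : ∀ x ∈ Set.Icc 0 α, |f₂ x| ≤ f₂ α := fun x hx => by
    rw [abs_of_nonneg (hf₂0 x hx)]; exact hf₂m hx hαmem hx.2
  -- products are integrable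
  have hf₁g₁ : IntervalIntegrable (fun x => f₁ x * g₁ x) volume 0 α :=
    mul_intervalIntegrable hα' hf₁i hg₁i hf₁C
  have hf₁g₂ : IntervalIntegrable (fun x => f₁ x * g₂ x) volume 0 α :=
    mul_intervalIntegrable hα' hf₁i hg₂i hf₁C
  have hf₂g₁ : IntervalIntegrable (fun x => f₂ x * g₁ x) volume 0 α :=
    mul_intervalIntegrable hα' hf₂i hg₁i hf₂C
  have hf₂g₂ : IntervalIntegrable (fun x => f₂ x * g₂ x) volume 0 α :=
    mul_intervalIntegrable hα' hf₂i hg₂i hf₂C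
  have hf₁h : IntervalIntegrable (fun x => f₁ x * h x) volume 0 α := by
    have := hf₁g₁.sub hf₁g₂
    simpa [hdef, mul_sub] using this
  have hf₂h : IntervalIntegrable (fun x => f₂ x * h x) volume 0 α := by
    have := hf₂g₁.sub hf₂g₂
    simpa [hdef, mul_sub] using this
  -- Part 1
  have part1 : 0 ≤ ∫ x in (0:ℝ)..α, f₁ x * h x :=
    key hα' hf₁h hhi hf₁0 hf₁m hhm hint
  -- Part 2 : apply key to f₂ α - f₂ x
  have part2 : (∫ x in (0:ℝ)..α, f₂ x * h x) ≤ 0 := by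
    have hf'0 : ∀ x ∈ Set.Icc 0 α, 0 ≤ f₂ α - f₂ x := fun x hx =>
      sub_nonneg.2 (hf₂m hx hαmem hx.2)
    have hf'm : AntitoneOn (fun x => f₂ α - f₂ x) (Set.Icc 0 α) := fun a ha b hb hab =>
      sub_le_sub_left (hf₂m ha hb hab) _
    have hf'h : IntervalIntegrable (fun x => (f₂ α - f₂ x) * h x) volume 0 α := by
      have := (hhi.const_mul (f₂ α)).sub hf₂h
      simpa [sub_mul] using this
    have hk := key hα' hf'h hhi hf'0 hf'm hhm hint
    have hsplit : ∫ x in (0:ℝ)..α, (f₂ α - f₂ x) * h x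
        = f₂ α * (∫ x in (0:ℝ)..α, h x) - ∫ x in (0:ℝ)..α, f₂ x * h x := by
      rw [← intervalIntegral.integral_const_mul,
        ← intervalIntegral.integral_sub (hhi.const_mul (f₂ α)) hf₂h]
      simp [sub_mul]
    rw [hsplit, hint, mul_zero, zero_sub] at hk
    linarith
  -- rewrite parts 1 and 2 in terms of differences of integrals
  have hsplit₁ : ∫ x in (0:ℝ)..α, f₁ x * h x
      = (∫ x in (0:ℝ)..α, f₁ x * g₁ x) - ∫ x in (0:ℝ)..α, f₁ x * g₂ x := by
    rw [← intervalIntegral.integral_sub hf₁g₁ hf₁g₂]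
    simp [hdef, mul_sub]
  have hsplit₂ : ∫ x in (0:ℝ)..α, f₂ x * h x
      = (∫ x in (0:ℝ)..α, f₂ x * g₁ x) - ∫ x in (0:ℝ)..α, f₂ x * g₂ x := by
    rw [← intervalIntegral.integral_sub hf₂g₁ hf₂g₂]
    simp [hdef, mul_sub]
  -- nonnegativity of the integrals
  have hnn₁₂ : 0 ≤ ∫ x in (0:ℝ)..α, f₁ x * g₂ x :=
    intervalIntegral.integral_nonneg hα' fun x hx =>
      mul_nonneg (hf₁0 x hx) (hg₂0 x hx)
  have hnn₂₁ : 0 ≤ ∫ x in (0:ℝ)..α, f₂ x * g₁ x :=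
    intervalIntegral.integral_nonneg hα' fun x hx =>
      mul_nonneg (hf₂0 x hx) (hg₁0 x hx)
  refine ⟨part1, part2, ?_⟩
  rw [hsplit₁] at part1
  rw [hsplit₂] at part2
  have h1 : (∫ x in (0:ℝ)..α, f₁ x * g₂ x) ≤ ∫ x in (0:ℝ)..α, f₁ x * g₁ x := by linarith
  have h2 : (∫ x in (0:ℝ)..α, f₂ x * g₁ x) ≤ ∫ x in (0:ℝ)..α, f₂ x * g₂ x := by linarith
  exact mul_le_mul h1 h2 hnn₂₁ (le_trans hnn₁₂ h1)
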